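/- Let W ⊆ ℕ and let G_W ⊆ ℚ² be the subgroup generated by g₁ = (1,0), g₂ = (0,1), (g₁+g₂)/2, g₁/p_{2k+1} for all k ≥ 0, g₂/p_{2k+2} for all k ≥ 0, and additionally g₂/p_{2k+1} for all k ∈ W. If the complement of W is infinite, then G_W is indecomposable. -/

import Mathlib

noncomputable def nthPrime (i : ℕ) : ℕ := Nat.nth Nat.Prime i

/-- The group `G_W` of Theorem 5.2 associated to a set `W ⊆ ℕ`. -/
noncomputable def GW (W : Set ℕ) : AddSubgroup (ℚ × ℚ) :=
  AddSubgroup.closure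
    ({((1 : ℚ), (0 : ℚ)), ((0 : ℚ), (1 : ℚ)), ((1/2 : ℚ), (1/2 : ℚ))} ∪
      {x | ∃ k : ℕ, x = ((1 / (nthPrime (2 * k + 1)) : ℚ), (0 : ℚ))} ∪
      {x | ∃ k : ℕ, x = ((0 : ℚ), (1 / (nthPrime (2 * k + 2)) : ℚ))} ∪
      {x | ∃ k ∈ W, x = ((0 : ℚ), (1 / (nthPrime (2 * k + 1)) : ℚ))})

/- ### Auxiliary facts about `nthPrime` -/

lemma nthPrime_prime (i : ℕ) : (nthPrime i).Prime :=
  Nat.nth_mem_of_infinite Nat.infinite_setOf_prime i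

lemma nthPrime_injective : Function.Injective nthPrime :=
  Nat.nth_injective Nat.infinite_setOf_prime

lemma le_nthPrime (i : ℕ) : i ≤ nthPrime i :=
  (Nat.nth_strictMono Nat.infinite_setOf_prime).le_apply

lemma nthPrime_not_dvd_nthPrime {i j : ℕ} (h : i ≠ j) :
    ¬ ((nthPrime i : ℤ) ∣ (nthPrime j : ℤ)) := by
  rw [Int.natCast_dvd_natCast]
  intro hd
  exact h (nthPrime_injective
    ((Nat.prime_dvd_prime_iff_eq (nthPrime_prime i) (nthPrime_prime j)).mp hd))

lemma nthPrime_ne_two {i : ℕ} (hi : i ≠ 0) : nthPrime i ≠ 2 := by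
  intro h
  have h2 : Nat.Prime 2 := Nat.prime_two
  have h0 : nthPrime 0 = 2 := by
    have := Nat.nth_count (p := Nat.Prime) h2
    have hc : Nat.count Nat.Prime 2 = 0 := by decide
    rw [hc] at this
    exact this
  exact hi (nthPrime_injective (h.trans h0.symm))

lemma nthPrime_not_dvd_two {i : ℕ} (hi : i ≠ 0) : ¬ ((nthPrime i : ℤ) ∣ (2 : ℤ)) := by
  intro hd
  have hp := nthPrime_prime i
  have hdvd : nthPrime i ∣ 2 := by exact_mod_cast hd
  exact nthPrime_ne_two hi ((Nat.prime_dvd_prime_iff_eq hp Nat.prime_two).mp hdvd)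

/- ### `p`-integrality -/

/-- `t` is a `p`-integer: `t = n / d` with `p ∤ d`. -/
def IsPInt (p : ℕ) (t : ℚ) : Prop := ∃ n d : ℤ, ¬ ((p : ℤ) ∣ d) ∧ t * d = n

lemma isPInt_int {p : ℕ} (hp : p.Prime) (m : ℤ) : IsPInt p (m : ℚ) :=
  ⟨m, 1, fun h => (Nat.prime_iff_prime_int.mp hp).not_dvd_one h, by simp⟩

lemma isPInt_zero {p : ℕ} (hp : p.Prime) : IsPInt p 0 := by simpa using isPInt_int hp 0

lemma isPInt_add {p : ℕ} (hp : p.Prime) {a b : ℚ} (ha : IsPInt p a) (hb : IsPInt p b) :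
    IsPInt p (a + b) := by
  obtain ⟨n₁, d₁, h₁, e₁⟩ := ha
  obtain ⟨n₂, d₂, h₂, e₂⟩ := hb
  refine ⟨n₁ * d₂ + n₂ * d₁, d₁ * d₂, ?_, ?_⟩
  · intro h
    rcases (Nat.prime_iff_prime_int.mp hp).dvd_mul.mp h with h | h
    exacts [h₁ h, h₂ h]
  · push_cast
    linear_combination (d₂ : ℚ) * e₁ + (d₁ : ℚ) * e₂

lemma isPInt_neg {p : ℕ} {a : ℚ} (ha : IsPInt p a) : IsPInt p (-a) := by
  obtain ⟨n, d, h, e⟩ := ha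
  exact ⟨-n, d, h, by push_cast; linear_combination -e⟩

lemma isPInt_one_div {p q : ℕ} (hq : q ≠ 0) (h : ¬ ((p : ℤ) ∣ (q : ℤ))) :
    IsPInt p (1 / (q : ℚ)) := by
  refine ⟨1, q, h, ?_⟩
  have : (q : ℚ) ≠ 0 := Nat.cast_ne_zero.mpr hq
  field_simp
  simp

/- ### Integrality of elements of `GW` -/

lemma GW_isPInt (W : Set ℕ) (p : ℕ) (hp : p.Prime) (π : (ℚ × ℚ) →+ ℚ)
    (h1 : IsPInt p (π (1, 0))) (h2 : IsPInt p (π (0, 1)))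
    (h3 : IsPInt p (π (1/2, 1/2)))
    (h4 : ∀ k : ℕ, IsPInt p (π (1 / (nthPrime (2 * k + 1)) , 0)))
    (h5 : ∀ k : ℕ, IsPInt p (π (0, 1 / (nthPrime (2 * k + 2)))))
    (h6 : ∀ k ∈ W, IsPInt p (π (0, 1 / (nthPrime (2 * k + 1))))) :
    ∀ x ∈ GW W, IsPInt p (π x) := by
  intro x hx
  induction hx using AddSubgroup.closure_induction with
  | mem x hx =>
    simp only [Set.mem_union, Set.mem_insert_iff, Set.mem_singleton_iff,
      Set.mem_setOf_eq] at hx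
    rcases hx with (((rfl | rfl | rfl) | ⟨k, rfl⟩) | ⟨k, rfl⟩) | ⟨k, hk, rfl⟩
    exacts [h1, h2, h3, h4 k, h5 k, h6 k hk]
  | zero => simpa using isPInt_zero hp
  | add x y hx hy ihx ihy => rw [map_add]; exact isPInt_add hp ihx ihy
  | neg x hx ihx => rw [map_neg]; exact isPInt_neg ihx

/-- second coordinates of `GW` are `p`-integers for `p = p_{2k+1}`, `k ∉ W`. -/
lemma GW_snd_isPInt (W : Set ℕ) {k : ℕ} (hk : k ∉ W) :
    ∀ x ∈ GW W, IsPInt (nthPrime (2 * k + 1)) (x.2) := by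
  have hp := nthPrime_prime (2 * k + 1)
  apply GW_isPInt W _ hp (AddMonoidHom.snd ℚ ℚ)
  · simpa using isPInt_zero hp
  · simpa using isPInt_int hp 1
  · simpa using isPInt_one_div (p := nthPrime (2 * k + 1)) two_ne_zero
      (nthPrime_not_dvd_two (by omega))
  · intro j; simpa using isPInt_zero hp
  · intro j
    simpa using isPInt_one_div (nthPrime_prime (2 * j + 2)).ne_zero
      (nthPrime_not_dvd_nthPrime (by omega))
  · intro j hj
    have hjk : j ≠ k := fun h => hk (h ▸ hj)
    simpa using isPInt_one_div (nthPrime_prime (2 * j + 1)).ne_zero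
      (nthPrime_not_dvd_nthPrime (by omega))

/-- first coordinates of `GW` are `p`-integers for `p = p_{2k+2}`. -/
lemma GW_fst_isPInt (W : Set ℕ) (k : ℕ) :
    ∀ x ∈ GW W, IsPInt (nthPrime (2 * k + 2)) (x.1) := by
  have hp := nthPrime_prime (2 * k + 2)
  apply GW_isPInt W _ hp (AddMonoidHom.fst ℚ ℚ)
  · simpa using isPInt_int hp 1
  · simpa using isPInt_zero hp
  · simpa using isPInt_one_div (p := nthPrime (2 * k + 2)) two_ne_zero
      (nthPrime_not_dvd_two (by omega))
  · intro j
    simpa using isPInt_one_div (nthPrime_prime (2 * j + 1)).ne_zero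
      (nthPrime_not_dvd_nthPrime (by omega))
  · intro j; simpa using isPInt_zero hp
  · intro j hj; simpa using isPInt_zero hp

/-- the difference of coordinates of elements of `GW` is a `2`-integer. -/
lemma GW_diff_isPInt (W : Set ℕ) :
    ∀ x ∈ GW W, IsPInt 2 (x.1 - x.2) := by
  have hp : Nat.Prime 2 := Nat.prime_two
  have hodd : ∀ i : ℕ, i ≠ 0 → ¬ ((2 : ℤ) ∣ (nthPrime i : ℤ)) := by
    intro i hi hd
    have : (2 : ℕ) ∣ nthPrime i := by exact_mod_cast hd
    exact nthPrime_ne_two hi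
      ((Nat.prime_dvd_prime_iff_eq Nat.prime_two (nthPrime_prime i)).mp this).symm
  apply GW_isPInt W 2 hp (AddMonoidHom.fst ℚ ℚ - AddMonoidHom.snd ℚ ℚ)
  · simpa using isPInt_int hp 1
  · simpa using isPInt_int hp (-1)
  · simpa using isPInt_zero hp
  · intro j
    simpa using isPInt_one_div (nthPrime_prime (2 * j + 1)).ne_zero (hodd _ (by omega))
  · intro j
    simpa using isPInt_neg
      (isPInt_one_div (nthPrime_prime (2 * j + 2)).ne_zero (hodd _ (by omega)))
  · intro j hj
    simpa using isPInt_neg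
      (isPInt_one_div (nthPrime_prime (2 * j + 1)).ne_zero (hodd _ (by omega)))

/- ### The key divisibility lemma -/

/-- If `g ∈ G = A ⊕ B` is divisible by arbitrarily large primes `p` for which `π` takes
`p`-integral values on `G`, then the `A`-component `a` of `g` satisfies `π a = 0`. -/
lemma keyAux {W : Set ℕ} {A B : AddSubgroup (GW W)}
    (hbot : A ⊓ B = ⊥) (hsup : A ⊔ B = ⊤)
    (π : (ℚ × ℚ) →+ ℚ) (Q : Set ℕ)
    (hQp : ∀ p ∈ Q, Nat.Prime p)
    (hQint : ∀ p ∈ Q, ∀ x : GW W, IsPInt p (π x))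
    (hQub : ∀ N : ℕ, ∃ p ∈ Q, N < p)
    {g a b : GW W} (ha : a ∈ A) (hb : b ∈ B) (hab : a + b = g)
    (hdiv : ∀ p ∈ Q, ∃ x : GW W, p • x = g) :
    π (a : ℚ × ℚ) = 0 := by
  by_contra ht
  set t : ℚ := π (a : ℚ × ℚ) with htdef
  obtain ⟨p, hpQ, hpgt⟩ := hQub t.num.natAbs
  have hp := hQp p hpQ
  have hpZ : Prime (p : ℤ) := Nat.prime_iff_prime_int.mp hp
  obtain ⟨x, hx⟩ := hdiv p hpQ
  have hxmem : x ∈ A ⊔ B := hsup ▸ AddSubgroup.mem_top x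
  obtain ⟨a', ha', b', hb', hab'⟩ := AddSubgroup.mem_sup.mp hxmem
  have h1 : p • a' + p • b' = a + b := by
    rw [← smul_add, hab', hx, hab]
  -- uniqueness of the decomposition
  have h2 : p • a' = a := by
    have hmem : p • a' - a ∈ A ⊓ B := by
      constructor
      · exact A.sub_mem (AddSubmonoid.nsmul_mem A.toAddSubmonoid ha' p) ha
      · have : p • a' - a = b - p • b' := by
          rw [sub_eq_sub_iff_add_eq_add, add_comm b]
          exact h1
        rw [this]
        exact B.sub_mem hb (AddSubmonoid.nsmul_mem B.toAddSubmonoid hb' p)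
    rw [hbot, AddSubgroup.mem_bot] at hmem
    exact sub_eq_zero.mp hmem
  -- so t = p * π a'
  have h3 : t = (p : ℚ) * π (a' : ℚ × ℚ) := by
    rw [htdef, ← h2]
    have : ((p • a' : GW W) : ℚ × ℚ) = p • (a' : ℚ × ℚ) := rfl
    rw [this, map_nsmul, nsmul_eq_mul]
  obtain ⟨n, d, hpd, hnd⟩ := hQint p hpQ a'
  -- t * d = p * n
  have h4 : t * d = (p : ℚ) * n := by
    rw [h3]
    linear_combination (p : ℚ) * hnd
  -- clear denominators: t.num * d = p * n * t.den
  have hden : (t.den : ℚ) ≠ 0 := Nat.cast_ne_zero.mpr t.pos.ne'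
  have h5 : (t.num : ℚ) * d = ((p : ℤ) * n * (t.den : ℤ) : ℤ) := by
    have hnum : (t.num : ℚ) = t * t.den := by
      exact (Rat.mul_den_eq_num t).symm
    push_cast
    rw [hnum]
    linear_combination (t.den : ℚ) * h4
  have h6 : t.num * d = (p : ℤ) * n * (t.den : ℤ) := by exact_mod_cast h5
  have h7 : (p : ℤ) ∣ t.num * d := ⟨n * t.den, by linarith [h6]⟩
  have h8 : (p : ℤ) ∣ t.num := (hpZ.dvd_mul.mp h7).resolve_right hpd
  have h9 : t.num ≠ 0 := Rat.num_ne_zero.mpr ht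
  have h10 : (p : ℤ) ≤ |t.num| := Int.le_of_dvd (abs_pos.mpr h9) ((dvd_abs _ _).mpr h8)
  have : p ≤ t.num.natAbs := by
    rwa [Int.abs_eq_natAbs, Int.ofNat_le] at h10
  omega

theorem GW_indecomposable_of_coinfinite (W : Set ℕ) (hW : Wᶜ.Infinite) :
    ¬ ∃ A B : AddSubgroup (GW W),
      A ≠ ⊥ ∧ B ≠ ⊥ ∧ A ⊔ B = ⊤ ∧ A ⊓ B = ⊥ := by
  rintro ⟨A, B, hA, hB, hsup, hbot⟩
  classical
  -- memberships of the generators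
  have m1 : ((1 : ℚ), (0 : ℚ)) ∈ GW W := AddSubgroup.subset_closure (by simp)
  have m2 : ((0 : ℚ), (1 : ℚ)) ∈ GW W := AddSubgroup.subset_closure (by simp)
  have mw : ((1/2 : ℚ), (1/2 : ℚ)) ∈ GW W := AddSubgroup.subset_closure (by simp)
  have mp1 : ∀ k : ℕ, ((1 / (nthPrime (2 * k + 1)) : ℚ), (0 : ℚ)) ∈ GW W := fun k =>
    AddSubgroup.subset_closure (by
      simp only [Set.mem_union, Set.mem_setOf_eq]
      exact Or.inl (Or.inl (Or.inr ⟨k, rfl⟩)))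
  have mp2 : ∀ k : ℕ, ((0 : ℚ), (1 / (nthPrime (2 * k + 2)) : ℚ)) ∈ GW W := fun k =>
    AddSubgroup.subset_closure (by
      simp only [Set.mem_union, Set.mem_setOf_eq]
      exact Or.inl (Or.inr ⟨k, rfl⟩))
  set e1 : GW W := ⟨(1, 0), m1⟩ with he1
  set e2 : GW W := ⟨(0, 1), m2⟩ with he2
  set w : GW W := ⟨(1/2, 1/2), mw⟩ with hwdef
  -- uniqueness of decompositions
  have uniq : ∀ {C D : AddSubgroup (GW W)}, C ⊓ D = ⊥ →
      ∀ {a a' b b' : GW W}, a ∈ C → a' ∈ C → b ∈ D → b' ∈ D → a + b = a' + b' → a = a' := by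
    intro C D hCD a a' b b' ha ha' hb hb' h
    have hmem : a - a' ∈ C ⊓ D := by
      constructor
      · exact C.sub_mem ha ha'
      · have hh : a - a' = b' - b := by
          rw [sub_eq_sub_iff_add_eq_add, h, add_comm]
        rw [hh]
        exact D.sub_mem hb' hb
    rw [hCD, AddSubgroup.mem_bot] at hmem
    exact sub_eq_zero.mp hmem
  have decomp : ∀ g : GW W, ∃ a ∈ A, ∃ b ∈ B, a + b = g := by
    intro g
    have : g ∈ A ⊔ B := hsup ▸ AddSubgroup.mem_top g
    exact AddSubgroup.mem_sup.mp this
  have hbot' : B ⊓ A = ⊥ := by rw [inf_comm]; exact hbot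
  have hsup' : B ⊔ A = ⊤ := by rw [sup_comm]; exact hsup
  -- the two families of primes
  set Q1 : Set ℕ := {p : ℕ | ∃ k ∉ W, p = nthPrime (2 * k + 1)} with hQ1def
  set Q2 : Set ℕ := {p : ℕ | ∃ k : ℕ, p = nthPrime (2 * k + 2)} with hQ2def
  have hQp1 : ∀ p ∈ Q1, Nat.Prime p := by rintro p ⟨k, -, rfl⟩; exact nthPrime_prime _
  have hQp2 : ∀ p ∈ Q2, Nat.Prime p := by rintro p ⟨k, rfl⟩; exact nthPrime_prime _
  have hQint1 : ∀ p ∈ Q1, ∀ x : GW W, IsPInt p ((AddMonoidHom.snd ℚ ℚ) (x : ℚ × ℚ)) := by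
    rintro p ⟨k, hk, rfl⟩ x
    exact GW_snd_isPInt W hk (x : ℚ × ℚ) x.2
  have hQint2 : ∀ p ∈ Q2, ∀ x : GW W, IsPInt p ((AddMonoidHom.fst ℚ ℚ) (x : ℚ × ℚ)) := by
    rintro p ⟨k, rfl⟩ x
    exact GW_fst_isPInt W k (x : ℚ × ℚ) x.2
  have hQub1 : ∀ N : ℕ, ∃ p ∈ Q1, N < p := by
    intro N
    obtain ⟨k, hk, hkN⟩ := hW.exists_gt N
    refine ⟨nthPrime (2 * k + 1), ⟨k, hk, rfl⟩, ?_⟩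
    have := le_nthPrime (2 * k + 1)
    omega
  have hQub2 : ∀ N : ℕ, ∃ p ∈ Q2, N < p := by
    intro N
    refine ⟨nthPrime (2 * N + 2), ⟨N, rfl⟩, ?_⟩
    have := le_nthPrime (2 * N + 2)
    omega
  -- divisibility of e1 and e2
  have hdiv1 : ∀ p ∈ Q1, ∃ x : GW W, p • x = e1 := by
    rintro p ⟨k, hk, rfl⟩
    refine ⟨⟨((1 / (nthPrime (2 * k + 1)) : ℚ), (0 : ℚ)), mp1 k⟩, ?_⟩
    apply Subtype.ext
    have hpne : ((nthPrime (2 * k + 1) : ℚ)) ≠ 0 :=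
      Nat.cast_ne_zero.mpr (nthPrime_prime _).ne_zero
    show (nthPrime (2 * k + 1)) • ((1 / (nthPrime (2 * k + 1)) : ℚ), (0 : ℚ))
        = ((1 : ℚ), (0 : ℚ))
    rw [Prod.ext_iff]
    constructor
    · show (nthPrime (2 * k + 1)) • (1 / (nthPrime (2 * k + 1)) : ℚ) = 1
      rw [nsmul_eq_mul]
      field_simp
    · show (nthPrime (2 * k + 1)) • (0 : ℚ) = 0
      simp
  have hdiv2 : ∀ p ∈ Q2, ∃ x : GW W, p • x = e2 := by
    rintro p ⟨k, rfl⟩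
    refine ⟨⟨((0 : ℚ), (1 / (nthPrime (2 * k + 2)) : ℚ)), mp2 k⟩, ?_⟩
    apply Subtype.ext
    have hpne : ((nthPrime (2 * k + 2) : ℚ)) ≠ 0 :=
      Nat.cast_ne_zero.mpr (nthPrime_prime _).ne_zero
    show (nthPrime (2 * k + 2)) • ((0 : ℚ), (1 / (nthPrime (2 * k + 2)) : ℚ))
        = ((0 : ℚ), (1 : ℚ))
    rw [Prod.ext_iff]
    constructor
    · show (nthPrime (2 * k + 2)) • (0 : ℚ) = 0
      simp
    · show (nthPrime (2 * k + 2)) • (1 / (nthPrime (2 * k + 2)) : ℚ) = 1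
      rw [nsmul_eq_mul]
      field_simp
  -- decompose e1 and e2
  obtain ⟨a1, ha1, b1, hb1, hab1⟩ := decomp e1
  obtain ⟨a2, ha2, b2, hb2, hab2⟩ := decomp e2
  have ha1snd : ((a1 : ℚ × ℚ)).2 = 0 :=
    keyAux hbot hsup (AddMonoidHom.snd ℚ ℚ) Q1 hQp1 hQint1 hQub1 ha1 hb1 hab1 hdiv1
  have hb1snd : ((b1 : ℚ × ℚ)).2 = 0 :=
    keyAux hbot' hsup' (AddMonoidHom.snd ℚ ℚ) Q1 hQp1 hQint1 hQub1 hb1 ha1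
      (by rw [add_comm]; exact hab1) hdiv1
  have ha2fst : ((a2 : ℚ × ℚ)).1 = 0 :=
    keyAux hbot hsup (AddMonoidHom.fst ℚ ℚ) Q2 hQp2 hQint2 hQub2 ha2 hb2 hab2 hdiv2
  have hb2fst : ((b2 : ℚ × ℚ)).1 = 0 :=
    keyAux hbot' hsup' (AddMonoidHom.fst ℚ ℚ) Q2 hQp2 hQint2 hQub2 hb2 ha2
      (by rw [add_comm]; exact hab2) hdiv2
  -- two nonzero elements of complementary subgroups cannot lie on a common line
  have nodup : ∀ {C D : AddSubgroup (GW W)}, C ⊓ D = ⊥ →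
      ∀ {a b : GW W}, a ∈ C → b ∈ D → ∀ (s u : ℚ) (v : ℚ × ℚ),
        (a : ℚ × ℚ) = s • v → (b : ℚ × ℚ) = u • v → a ≠ 0 → b ≠ 0 → False := by
    intro C D hCD a b haC hbD s u v hs hu hane hbne
    have hane' : (a : ℚ × ℚ) ≠ 0 := fun h => hane (Subtype.ext h)
    have hbne' : (b : ℚ × ℚ) ≠ 0 := fun h => hbne (Subtype.ext h)
    have hs0 : s ≠ 0 := by rintro rfl; rw [zero_smul] at hs; exact hane' hs
    have hu0 : u ≠ 0 := by rintro rfl; rw [zero_smul] at hu; exact hbne' hu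
    set m : ℤ := u.num * s.den with hmdef
    set n : ℤ := s.num * u.den with hndef
    have hsd : (s.den : ℚ) ≠ 0 := Nat.cast_ne_zero.mpr s.pos.ne'
    have hud : (u.den : ℚ) ≠ 0 := Nat.cast_ne_zero.mpr u.pos.ne'
    have hsnum : (s.num : ℚ) = s * s.den := by exact (Rat.mul_den_eq_num s).symm
    have hunum : (u.num : ℚ) = u * u.den := by exact (Rat.mul_den_eq_num u).symm
    have hmn : m • a = n • b := by
      apply Subtype.ext
      show m • (a : ℚ × ℚ) = n • (b : ℚ × ℚ)
      rw [hs, hu, ← smul_assoc, ← smul_assoc]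
      congr 1
      show m • s = n • u
      rw [zsmul_eq_mul, zsmul_eq_mul, hmdef, hndef]
      push_cast
      rw [hsnum, hunum]
      ring
    have hm0 : m ≠ 0 :=
      mul_ne_zero (Rat.num_ne_zero.mpr hu0) (Int.natCast_ne_zero.mpr s.pos.ne')
    have hmem : m • a ∈ C ⊓ D :=
      ⟨C.zsmul_mem haC m, by rw [hmn]; exact D.zsmul_mem hbD n⟩
    rw [hCD, AddSubgroup.mem_bot] at hmem
    apply hane
    apply Subtype.ext
    have hv : m • (a : ℚ × ℚ) = 0 := by
      have := congrArg (fun z : GW W => (z : ℚ × ℚ)) hmem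
      simpa using this
    have hfst : (m : ℚ) * ((a : ℚ × ℚ)).1 = 0 := by
      have := congrArg Prod.fst hv
      simpa [zsmul_eq_mul] using this
    have hsnd : (m : ℚ) * ((a : ℚ × ℚ)).2 = 0 := by
      have := congrArg Prod.snd hv
      simpa [zsmul_eq_mul] using this
    have hmQ : (m : ℚ) ≠ 0 := Int.cast_ne_zero.mpr hm0
    rw [Prod.ext_iff]
    exact ⟨(mul_eq_zero.mp hfst).resolve_left hmQ,
           (mul_eq_zero.mp hsnd).resolve_left hmQ⟩
  -- hence e1 lies entirely in A or in B, and similarly e2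
  have hcase1 : e1 ∈ A ∨ e1 ∈ B := by
    by_cases h : a1 = 0
    · right; rw [← hab1, h, zero_add]; exact hb1
    · left
      have hb10 : b1 = 0 := by
        by_contra hb10
        exact nodup hbot ha1 hb1 ((a1 : ℚ × ℚ)).1 ((b1 : ℚ × ℚ)).1 ((1 : ℚ), (0 : ℚ))
          (by rw [Prod.ext_iff]; constructor <;> simp [ha1snd])
          (by rw [Prod.ext_iff]; constructor <;> simp [hb1snd]) h hb10
      rw [← hab1, hb10, add_zero]; exact ha1
  have hcase2 : e2 ∈ A ∨ e2 ∈ B := by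
    by_cases h : a2 = 0
    · right; rw [← hab2, h, zero_add]; exact hb2
    · left
      have hb20 : b2 = 0 := by
        by_contra hb20
        exact nodup hbot ha2 hb2 ((a2 : ℚ × ℚ)).2 ((b2 : ℚ × ℚ)).2 ((0 : ℚ), (1 : ℚ))
          (by rw [Prod.ext_iff]; constructor <;> simp [ha2fst])
          (by rw [Prod.ext_iff]; constructor <;> simp [hb2fst]) h hb20
      rw [← hab2, hb20, add_zero]; exact ha2
  -- e1 and e2 cannot lie on the same side
  have same : ∀ {C D : AddSubgroup (GW W)}, C ⊓ D = ⊥ → D ≠ ⊥ → e1 ∈ C → e2 ∈ C → False := by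
    intro C D hCD hD h1 h2
    obtain ⟨b, hbne⟩ := AddSubgroup.ne_bot_iff_exists_ne_zero.mp hD
    set g : GW W := (b : GW W) with hgdef
    have hgD : g ∈ D := b.2
    have hgne : g ≠ 0 := fun h => hbne (Subtype.ext h)
    have hgne' : (g : ℚ × ℚ) ≠ 0 := fun h => hgne (Subtype.ext h)
    set x : ℚ := ((g : ℚ × ℚ)).1 with hxdef
    set y : ℚ := ((g : ℚ × ℚ)).2 with hydef
    set N : ℤ := (x.den : ℤ) * (y.den : ℤ) with hNdef
    have hxd : (x.den : ℚ) ≠ 0 := Nat.cast_ne_zero.mpr x.pos.ne'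
    have hyd : (y.den : ℚ) ≠ 0 := Nat.cast_ne_zero.mpr y.pos.ne'
    have hxnum : (x.num : ℚ) = x * x.den := by exact (Rat.mul_den_eq_num x).symm
    have hynum : (y.num : ℚ) = y * y.den := by exact (Rat.mul_den_eq_num y).symm
    have key : N • g = (x.num * y.den) • e1 + (y.num * x.den) • e2 := by
      apply Subtype.ext
      show N • (g : ℚ × ℚ)
          = (x.num * (y.den : ℤ)) • ((1 : ℚ), (0 : ℚ)) + (y.num * (x.den : ℤ)) • ((0 : ℚ), (1 : ℚ))
      rw [Prod.ext_iff]
      constructor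
      · show N • x = (x.num * (y.den : ℤ)) • (1 : ℚ) + (y.num * (x.den : ℤ)) • (0 : ℚ)
        rw [zsmul_eq_mul, zsmul_eq_mul, zsmul_eq_mul, hNdef]
        push_cast
        rw [hxnum]
        ring
      · show N • y = (x.num * (y.den : ℤ)) • (0 : ℚ) + (y.num * (x.den : ℤ)) • (1 : ℚ)
        rw [zsmul_eq_mul, zsmul_eq_mul, zsmul_eq_mul, hNdef]
        push_cast
        rw [hynum]
        ring
    have hmem : N • g ∈ C ⊓ D := by
      constructor
      · rw [key]
        exact C.add_mem (C.zsmul_mem h1 _) (C.zsmul_mem h2 _)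
      · exact D.zsmul_mem hgD N
    rw [hCD, AddSubgroup.mem_bot] at hmem
    have hN0 : N ≠ 0 := mul_ne_zero (Int.natCast_ne_zero.mpr x.pos.ne')
      (Int.natCast_ne_zero.mpr y.pos.ne')
    apply hgne
    apply Subtype.ext
    have hv : N • (g : ℚ × ℚ) = 0 := by
      have := congrArg (fun z : GW W => (z : ℚ × ℚ)) hmem
      simpa using this
    have hfst : (N : ℚ) * x = 0 := by
      have := congrArg Prod.fst hv
      simpa [zsmul_eq_mul] using this
    have hsnd : (N : ℚ) * y = 0 := by
      have := congrArg Prod.snd hv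
      simpa [zsmul_eq_mul] using this
    have hNQ : (N : ℚ) ≠ 0 := Int.cast_ne_zero.mpr hN0
    rw [Prod.ext_iff]
    exact ⟨(mul_eq_zero.mp hfst).resolve_left hNQ,
           (mul_eq_zero.mp hsnd).resolve_left hNQ⟩
  -- e1 and e2 cannot lie on opposite sides
  have mixed : ∀ {C D : AddSubgroup (GW W)}, C ⊓ D = ⊥ → C ⊔ D = ⊤ →
      e1 ∈ C → e2 ∈ D → False := by
    intro C D hCD hCDs h1 h2
    have hwmem : w ∈ C ⊔ D := hCDs ▸ AddSubgroup.mem_top w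
    obtain ⟨c, hc, d, hd, hcd⟩ := AddSubgroup.mem_sup.mp hwmem
    have h2w : (2 : ℕ) • c + (2 : ℕ) • d = e1 + e2 := by
      rw [← smul_add, hcd]
      apply Subtype.ext
      show (2 : ℕ) • ((1/2 : ℚ), (1/2 : ℚ)) = ((1 : ℚ), (0 : ℚ)) + ((0 : ℚ), (1 : ℚ))
      rw [Prod.ext_iff]
      constructor <;> · show (2 : ℕ) • (1/2 : ℚ) = _; rw [nsmul_eq_mul]; norm_num
    have hce : (2 : ℕ) • c = e1 :=
      uniq hCD (AddSubmonoid.nsmul_mem C.toAddSubmonoid hc 2)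
        h1 (AddSubmonoid.nsmul_mem D.toAddSubmonoid hd 2) h2 h2w
    have hval : (2 : ℕ) • ((c : GW W) : ℚ × ℚ) = ((1 : ℚ), (0 : ℚ)) :=
      congrArg (fun z : GW W => (z : ℚ × ℚ)) hce
    have hc1 : ((c : ℚ × ℚ)).1 = 1/2 := by
      have h := congrArg Prod.fst hval
      rw [Prod.smul_fst, nsmul_eq_mul] at h
      push_cast at h
      linarith
    have hc2 : ((c : ℚ × ℚ)).2 = 0 := by
      have h := congrArg Prod.snd hval
      rw [Prod.smul_snd, nsmul_eq_mul] at h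
      push_cast at h
      linarith
    obtain ⟨n, dd, hdd, hnd⟩ := GW_diff_isPInt W (c : ℚ × ℚ) c.2
    rw [hc1, hc2, sub_zero] at hnd
    apply hdd
    refine ⟨n, ?_⟩
    have : (dd : ℚ) = 2 * n := by linear_combination 2 * hnd
    exact_mod_cast this
  rcases hcase1 with h1A | h1B <;> rcases hcase2 with h2A | h2B
  · exact same hbot hB h1A h2A
  · exact mixed hbot hsup h1A h2B
  · exact mixed hbot' hsup' h1B h2A
  · exact same hbot' hA h1B h2B
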